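/- Fix a positive integer k and a sequence β_n ≥ 0 with β_n = o(n). Let E_k denote expectation over uniformly random σ^(1),…,σ^(k) ∈ {−1,+1}^n with off-diagonal overlaps q̃_{ij} as above. Then E_k[exp(β_n Σ_{i≠j} q̃_{ij})] = exp( (k(k−1)/n) β_n² + O(β_n³ n^{−2}) ). -/

import Mathlib

open Filter Finset

/-- The map sending a Boolean to the spin value `±1`. -/
noncomputable def spin (b : Bool) : ℝ := if b then 1 else -1

/-- The overlap `q(σ,σ') = (1/n) ∑_s σ_s σ'_s` of two spin configurations. -/
noncomputable def overlap {n : ℕ} (σ τ : Fin n → Bool) : ℝ :=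
  (n : ℝ)⁻¹ * ∑ s, spin (σ s) * spin (τ s)

noncomputable def Ssum {k : ℕ} (δ : Fin k → Bool) : ℝ := ∑ i, spin (δ i)

noncomputable def G (k : ℕ) (t : ℝ) : ℝ := ∑ δ : Fin k → Bool, Real.exp (t * (Ssum δ)^2)


lemma sum_pi_succ {k : ℕ} (f : (Fin (k+1) → Bool) → ℝ) :
    ∑ δ : Fin (k+1) → Bool, f δ = ∑ b : Bool, ∑ δ : Fin k → Bool, f (Fin.cons b δ) := by
  rw [← (Fin.consEquiv (fun _ => Bool)).sum_comp f, Fintype.sum_prod_type]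
  rfl

lemma Ssum_cons {k : ℕ} (b : Bool) (δ : Fin k → Bool) :
    Ssum (Fin.cons b δ) = spin b + Ssum δ := by
  simp [Ssum, Fin.sum_univ_succ]

lemma sum_one (k : ℕ) : ∑ _δ : Fin k → Bool, (1:ℝ) = 2^k := by
  simp [Finset.card_univ]

lemma mom2 (k : ℕ) : ∑ δ : Fin k → Bool, (Ssum δ)^2 = (k:ℝ) * 2^k := by
  induction k with
  | zero => simp [Ssum]
  | succ k ih =>
    rw [sum_pi_succ (fun δ => (Ssum δ)^2)]
    have h : ∀ δ : Fin k → Bool, ∑ b : Bool, (Ssum (Fin.cons b δ))^2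
        = 2*(Ssum δ)^2 + 2 := by
      intro δ
      simp only [Fintype.sum_bool, Ssum_cons, spin]
      norm_num; ring
    rw [Finset.sum_comm]
    simp_rw [h]
    rw [Finset.sum_add_distrib, ← Finset.mul_sum, ih]
    have := sum_one k
    rw [Finset.sum_const, Finset.card_univ] at this ⊢
    simp only [nsmul_eq_mul] at this ⊢
    rw [show ((Fintype.card (Fin k → Bool)):ℝ) * 2 = ((Fintype.card (Fin k → Bool)):ℝ) * 1 * 2 by ring, this]
    push_cast; ring

lemma mom4 (k : ℕ) : ∑ δ : Fin k → Bool, (Ssum δ)^4 = (3*(k:ℝ)^2 - 2*k) * 2^k := by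
  induction k with
  | zero => simp [Ssum]
  | succ k ih =>
    rw [sum_pi_succ (fun δ => (Ssum δ)^4)]
    have h : ∀ δ : Fin k → Bool, ∑ b : Bool, (Ssum (Fin.cons b δ))^4
        = 2*(Ssum δ)^4 + 12*(Ssum δ)^2 + 2 := by
      intro δ
      simp only [Fintype.sum_bool, Ssum_cons, spin]
      norm_num; ring
    rw [Finset.sum_comm]
    simp_rw [h]
    rw [Finset.sum_add_distrib, Finset.sum_add_distrib, ← Finset.mul_sum, ← Finset.mul_sum,
      ih, mom2]
    have := sum_one k
    rw [Finset.sum_const, Finset.card_univ] at this ⊢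
    simp only [nsmul_eq_mul] at this ⊢
    rw [show ((Fintype.card (Fin k → Bool)):ℝ) * 2 = ((Fintype.card (Fin k → Bool)):ℝ) * 1 * 2 by ring, this]
    push_cast; ring

lemma abs_Ssum_le {k : ℕ} (δ : Fin k → Bool) : |Ssum δ| ≤ k := by
  calc |Ssum δ| ≤ ∑ i, |spin (δ i)| := Finset.abs_sum_le_sum_abs _ _
  _ ≤ k := by
    have : ∀ i, |spin (δ i)| = 1 := by intro i; cases δ i <;> simp [spin]
    simp [this]

lemma mom6_le (k : ℕ) : ∑ δ : Fin k → Bool, (Ssum δ)^6 ≤ (k:ℝ)^6 * 2^k := by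
  calc ∑ δ : Fin k → Bool, (Ssum δ)^6 ≤ ∑ _δ : Fin k → Bool, (k:ℝ)^6 := by
        apply Finset.sum_le_sum
        intro δ _
        have h := abs_Ssum_le δ
        have h0 : (0:ℝ) ≤ |Ssum δ| := abs_nonneg _
        calc (Ssum δ)^6 ≤ |Ssum δ|^6 := by
              rw [← abs_pow]; exact le_abs_self _
        _ ≤ (k:ℝ)^6 := by
              exact pow_le_pow_left₀ h0 h 6
  _ = (k:ℝ)^6 * 2^k := by
        rw [Finset.sum_const, Finset.card_univ, nsmul_eq_mul]
        simp [mul_comm]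
lemma factorize (k n : ℕ) (t : ℝ) :
    ∑ σ : Fin k → Fin n → Bool, ∏ s : Fin n, Real.exp (t * (∑ i, spin (σ i s))^2)
      = (G k t)^n := by
  have h1 : (G k t)^n = ∏ _s : Fin n, G k t := by
    rw [Finset.prod_const, Finset.card_univ, Fintype.card_fin]
  rw [h1]
  unfold G
  rw [Finset.prod_univ_sum]
  rw [Fintype.piFinset_univ]
  rw [← (Equiv.piComm (fun (_ : Fin k) (_ : Fin n) => Bool)).symm.sum_comp]
  apply Finset.sum_congr rfl
  intro σ _
  apply Finset.prod_congr rfl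
  intro s _
  rfl
lemma spin_mul_self (b : Bool) : spin b * spin b = 1 := by cases b <;> simp [spin]

lemma exponent_rewrite {k n : ℕ} (hn : 0 < n) (σ : Fin k → Fin n → Bool) :
    ∑ i, ∑ j, (if i = j then 0 else overlap (σ i) (σ j))
      = (n:ℝ)⁻¹ * ∑ s, (∑ i, spin (σ i s))^2 - k := by
  have hdiag : ∀ i : Fin k, overlap (σ i) (σ i) = 1 := by
    intro i
    unfold overlap
    simp only [spin_mul_self, Finset.sum_const, Finset.card_univ, Fintype.card_fin,
      nsmul_eq_mul, mul_one]
    field_simp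
  have hsplit : ∀ i : Fin k, ∑ j, (if i = j then 0 else overlap (σ i) (σ j))
      = (∑ j, overlap (σ i) (σ j)) - 1 := by
    intro i
    have : ∀ j, (if i = j then 0 else overlap (σ i) (σ j))
        = overlap (σ i) (σ j) - (if i = j then overlap (σ i) (σ j) else 0) := by
      intro j; by_cases h : i = j <;> simp [h]
    simp_rw [this]
    rw [Finset.sum_sub_distrib, Finset.sum_ite_eq, if_pos (Finset.mem_univ i), hdiag]
  simp_rw [hsplit]
  rw [Finset.sum_sub_distrib, Finset.sum_const, Finset.card_univ, Fintype.card_fin,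
    nsmul_eq_mul, mul_one]
  congr 1
  unfold overlap
  rw [Finset.mul_sum]
  simp_rw [← Finset.mul_sum]
  congr 1
  have hsq : ∀ s : Fin n, (∑ i, spin (σ i s))^2 = ∑ i, ∑ j, spin (σ i s) * spin (σ j s) := by
    intro s; rw [sq, Finset.sum_mul_sum]
  simp_rw [hsq]
  have h1 : ∀ i : Fin k, (∑ j : Fin k, ∑ s : Fin n, spin (σ i s) * spin (σ j s))
      = ∑ s : Fin n, ∑ j : Fin k, spin (σ i s) * spin (σ j s) := fun i => Finset.sum_comm
  simp_rw [h1]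
  exact Finset.sum_comm
lemma exp_taylor_lower {x : ℝ} (hx : 0 ≤ x) : 1 + x + x^2/2 ≤ Real.exp x := by
  have h := Real.sum_le_exp_of_nonneg hx 3
  rw [Finset.sum_range_succ, Finset.sum_range_succ, Finset.sum_range_succ,
    Finset.sum_range_zero] at h
  norm_num [Nat.factorial] at h
  linarith

lemma exp_taylor_upper {x : ℝ} (hx : 0 ≤ x) (hx1 : x ≤ 1) :
    Real.exp x ≤ 1 + x + x^2/2 + x^3 := by
  have h := Real.exp_bound' hx hx1 (n := 3) (by norm_num)
  rw [Finset.sum_range_succ, Finset.sum_range_succ, Finset.sum_range_succ,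
    Finset.sum_range_zero] at h
  norm_num [Nat.factorial] at h
  have : x^3 * (3+1) / ((Nat.factorial 3 : ℝ) * 3) ≤ x^3 := by
    have : (Nat.factorial 3 : ℝ) = 6 := by norm_num [Nat.factorial]
    rw [this]
    nlinarith [pow_nonneg hx 3]
  nlinarith [pow_nonneg hx 3]

set_option maxHeartbeats 1000000 in
lemma taylor_log (K t u : ℝ) (hK1 : 1 ≤ K) (ht0 : 0 ≤ t) (ht8 : t ≤ ((8:ℝ)*K^6)⁻¹)
    (hu1 : K*t + ((3*K^2-2*K)/2)*t^2 ≤ u)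
    (hu2 : u ≤ K*t + ((3*K^2-2*K)/2)*t^2 + K^6*t^3) :
    |Real.log (1+u) - K*t - K*(K-1)*t^2| ≤ 22*K^7*t^3 := by
  set a : ℝ := (3*K^2-2*K)/2 with hadef
  have hKpos : (0:ℝ) < K := by linarith
  have hK6pos : (0:ℝ) < K^6 := by positivity
  have htK : K^6 * t ≤ 1/8 := by
    have h := mul_le_mul_of_nonneg_left ht8 (le_of_lt hK6pos)
    have h2 : K^6 * ((8:ℝ) * K^6)⁻¹ = 1/8 := by field_simp
    linarith [h2 ▸ h]
  have hK4 : (1:ℝ) ≤ K^4 := one_le_pow₀ hK1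
  have hK2le : K^2 ≤ K^6 := by nlinarith [sq_nonneg K]
  have ht1 : t ≤ 1 := by nlinarith
  have ha0 : 0 ≤ a := by rw [hadef]; nlinarith
  have haK : a ≤ 2*K^6 := by rw [hadef]; nlinarith
  have hu0 : 0 ≤ u := by nlinarith [mul_nonneg (mul_nonneg ha0 ht0) ht0, mul_nonneg hKpos.le ht0]
  have htt : 0 ≤ t*t := mul_nonneg ht0 ht0
  have hb1 : K^6 * t * t ≤ (1/8) * t := mul_le_mul_of_nonneg_right htK ht0
  have hb2 : a * (t*t) ≤ (2*K^6) * (t*t) := mul_le_mul_of_nonneg_right haK htt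
  have hb3 : K^6 * t * (t*t) ≤ (1/8) * (t*t) := mul_le_mul_of_nonneg_right htK htt
  have hb4 : t * (t*t) ≤ 1 * (t*t) := mul_le_mul_of_nonneg_right ht1 htt
  have hat2 : a*t^2 ≤ t/4 := by nlinarith
  have hK6t3 : K^6*t^3 ≤ t/8 := by nlinarith
  have htKt : t ≤ K*t := by nlinarith
  have hu2K : u ≤ 2*K*t := by linarith
  have hK5 : (1:ℝ) ≤ K^5 := one_le_pow₀ hK1
  have hKK6 : K ≤ K^6 := by nlinarith
  have hKt6 : K*t ≤ K^6*t := mul_le_mul_of_nonneg_right hKK6 ht0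
  have huq : u ≤ 1/4 := by linarith
  -- log bound
  have hlog : |Real.log (1+u) - u + u^2/2| ≤ 2*u^3 := by
    have habs : |(-u)| < 1 := by rw [abs_neg, abs_of_nonneg hu0]; linarith
    have h := Real.abs_log_sub_add_sum_range_le habs 2
    have hs : (∑ i ∈ Finset.range 2, (-u) ^ (i + 1) / (i + 1)) = -u + u^2/2 := by
      rw [Finset.sum_range_succ, Finset.sum_range_succ, Finset.sum_range_zero]
      norm_num
    rw [hs] at h
    have h1 : (1:ℝ) - -u = 1 + u := by ring
    rw [h1, abs_neg, abs_of_nonneg hu0] at h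
    have h2 : u^3 / (1-u) ≤ 2*u^3 := by
      rw [div_le_iff₀ (by linarith)]
      nlinarith [pow_nonneg hu0 3]
    have h3 : |Real.log (1+u) - u + u^2/2| = |(-u + u^2/2) + Real.log (1+u)| := by
      rw [show Real.log (1+u) - u + u^2/2 = (-u + u^2/2) + Real.log (1+u) by ring]
    rw [h3]
    linarith
  -- final estimate
  have ht3 : (0:ℝ) ≤ t^3 := by positivity
  have hu3 : u^3 ≤ 8*K^3*t^3 := by nlinarith [pow_le_pow_left₀ hu0 hu2K 3]
  have hid : a*t^2 = K*(K-1)*t^2 + (K^2*t^2)/2 := by rw [hadef]; ring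
  have hsum0 : 0 ≤ K*t + a*t^2 := by positivity
  have husq_low : K^2*t^2 ≤ u^2 := by
    nlinarith [mul_self_le_mul_self hsum0 hu1, mul_nonneg (mul_nonneg (mul_nonneg hKpos.le ht0) ha0) htt,
      sq_nonneg (a*t^2)]
  have hd1 : u - K*t ≤ 3*K^6*t^2 := by nlinarith
  have hd1' : 0 ≤ u - K*t := by nlinarith [mul_nonneg (mul_nonneg ha0 ht0) ht0]
  have hd2 : u + K*t ≤ 3*(K*t) := by nlinarith
  have hprod : (u - K*t)*(u + K*t) ≤ (3*K^6*t^2)*(3*(K*t)) := by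
    apply mul_le_mul hd1 hd2 (by positivity) (by positivity)
  have husq_up : u^2 ≤ K^2*t^2 + 9*K^7*t^3 := by nlinarith [hprod]
  have h67 : K^6*t^3 ≤ K^7*t^3 :=
    mul_le_mul_of_nonneg_right (pow_le_pow_right₀ hK1 (by norm_num)) ht3
  have h37 : K^3*t^3 ≤ K^7*t^3 :=
    mul_le_mul_of_nonneg_right (pow_le_pow_right₀ hK1 (by norm_num)) ht3
  rw [abs_le] at hlog ⊢
  constructor <;> linarith

lemma key (k : ℕ) (hk : 0 < k) (t : ℝ) (ht0 : 0 ≤ t) (ht8 : t ≤ ((8:ℝ) * (k:ℝ)^6)⁻¹) :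
    |Real.log (G k t / 2^k) - k*t - k*(k-1)*t^2| ≤ 22*(k:ℝ)^7 * t^3 := by
  set K := (k:ℝ) with hKdef
  have hK1 : (1:ℝ) ≤ K := by rw [hKdef]; exact_mod_cast hk
  have hKpos : (0:ℝ) < K := by linarith
  have hK6pos : (0:ℝ) < K^6 := by positivity
  have htK : K^6 * t ≤ 1/8 := by
    have h := mul_le_mul_of_nonneg_left ht8 (le_of_lt hK6pos)
    have : K^6 * ((8:ℝ) * K^6)⁻¹ = 1/8 := by field_simp
    linarith [this ▸ h]
  have hK4 : (1:ℝ) ≤ K^4 := one_le_pow₀ hK1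
  have hK2le : K^2 ≤ K^6 := by nlinarith [sq_nonneg K]
  have ht1 : t ≤ 1 := by nlinarith
  set P : ℝ := (2:ℝ)^k with hPdef
  have hP : (0:ℝ) < P := by positivity
  set a : ℝ := (3*K^2 - 2*K)/2 with hadef
  have ha0 : 0 ≤ a := by nlinarith
  have haK : a ≤ 2*K^6 := by nlinarith
  -- pointwise bounds
  have hxK : ∀ δ : Fin k → Bool, (Ssum δ)^2 ≤ K^2 := by
    intro δ
    have h := abs_Ssum_le δ
    calc (Ssum δ)^2 = |Ssum δ|^2 := (sq_abs _).symm
    _ ≤ K^2 := by nlinarith [abs_nonneg (Ssum δ)]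
  have hx01 : ∀ δ : Fin k → Bool, 0 ≤ t * (Ssum δ)^2 ∧ t * (Ssum δ)^2 ≤ 1 := by
    intro δ
    constructor
    · positivity
    · nlinarith [hxK δ, sq_nonneg (Ssum δ)]
  -- sum bounds
  have Glower : (1 + K*t + a*t^2) * P ≤ G k t := by
    have h : ∀ δ : Fin k → Bool, 1 + t*(Ssum δ)^2 + t^2*(Ssum δ)^4/2 ≤ Real.exp (t * (Ssum δ)^2) := by
      intro δ
      have := exp_taylor_lower (hx01 δ).1
      calc 1 + t*(Ssum δ)^2 + t^2*(Ssum δ)^4/2 = 1 + t*(Ssum δ)^2 + (t*(Ssum δ)^2)^2/2 := by ring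
      _ ≤ Real.exp (t * (Ssum δ)^2) := this
    calc (1 + K*t + a*t^2) * P
        = ∑ δ : Fin k → Bool, (1 + t*(Ssum δ)^2 + t^2*(Ssum δ)^4/2) := by
          rw [Finset.sum_add_distrib, Finset.sum_add_distrib, sum_one, ← Finset.mul_sum, mom2]
          have h4 : ∑ δ : Fin k → Bool, t^2*(Ssum δ)^4/2 = t^2 * ((3*K^2-2*K) * P)/2 := by
            rw [← Finset.sum_div, ← Finset.mul_sum, mom4]
          rw [h4, hadef]; ring
    _ ≤ G k t := Finset.sum_le_sum (fun δ _ => h δ)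
  have Gupper : G k t ≤ (1 + K*t + a*t^2 + K^6*t^3) * P := by
    have h : ∀ δ : Fin k → Bool, Real.exp (t * (Ssum δ)^2)
        ≤ 1 + t*(Ssum δ)^2 + t^2*(Ssum δ)^4/2 + t^3*(Ssum δ)^6 := by
      intro δ
      have := exp_taylor_upper (hx01 δ).1 (hx01 δ).2
      calc Real.exp (t * (Ssum δ)^2)
          ≤ 1 + t*(Ssum δ)^2 + (t*(Ssum δ)^2)^2/2 + (t*(Ssum δ)^2)^3 := this
      _ = 1 + t*(Ssum δ)^2 + t^2*(Ssum δ)^4/2 + t^3*(Ssum δ)^6 := by ring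
    calc G k t ≤ ∑ δ : Fin k → Bool, (1 + t*(Ssum δ)^2 + t^2*(Ssum δ)^4/2 + t^3*(Ssum δ)^6) :=
          Finset.sum_le_sum (fun δ _ => h δ)
    _ ≤ (1 + K*t + a*t^2 + K^6*t^3) * P := by
        rw [Finset.sum_add_distrib, Finset.sum_add_distrib, Finset.sum_add_distrib, sum_one,
          ← Finset.mul_sum, mom2]
        have h4 : ∑ δ : Fin k → Bool, t^2*(Ssum δ)^4/2 = t^2 * ((3*K^2-2*K) * P)/2 := by
          rw [← Finset.sum_div, ← Finset.mul_sum, mom4]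
        have h6 : ∑ δ : Fin k → Bool, t^3*(Ssum δ)^6 ≤ t^3 * (K^6 * P) := by
          rw [← Finset.mul_sum]
          exact mul_le_mul_of_nonneg_left (mom6_le k) (by positivity)
        rw [h4]
        have : (1 + K*t + a*t^2 + K^6*t^3) * P
            = (P + K * t * P + t^2*((3*K^2-2*K)*P)/2) + t^3*(K^6*P) := by rw [hadef]; ring
        rw [this]
        linarith [h6]
  -- F and u
  have hFlow : 1 + K*t + a*t^2 ≤ G k t / P := (le_div_iff₀ hP).mpr Glower
  have hFup : G k t / P ≤ 1 + K*t + a*t^2 + K^6*t^3 := (div_le_iff₀ hP).mpr Gupper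
  have hFU : Real.log (G k t / P) = Real.log (1 + (G k t / P - 1)) := by
    rw [show (1:ℝ) + (G k t / P - 1) = G k t / P by ring]
  rw [hFU]
  exact taylor_log K t (G k t / P - 1) hK1 ht0 ht8 (by rw [← hadef]; linarith)
    (by rw [← hadef]; linarith)

/-- For `β_n ≥ 0` with `β_n = o(n)` and uniformly random `σ^(1),…,σ^(k) ∈ {−1,+1}^n`,
`E_k[exp(β_n ∑_{i≠j} q̃_{ij})] = exp((k(k−1)/n)β_n² + O(β_n³ n^{−2}))`. -/
theorem overlap_sum_mgf_asymptotics (k : ℕ) (hk : 0 < k) (β : ℕ → ℝ)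
    (hβ : ∀ n, 0 ≤ β n)
    (hβn : Tendsto (fun n : ℕ => β n / n) atTop (nhds 0)) :
    ∃ C > (0 : ℝ), ∃ N : ℕ, ∀ n ≥ N, ∃ e : ℝ,
      |e| ≤ C * (β n) ^ 3 / (n : ℝ) ^ 2 ∧
      ((2 : ℝ) ^ (n * k))⁻¹ *
          ∑ σ : Fin k → Fin n → Bool,
            Real.exp (β n * ∑ i, ∑ j, if i = j then 0 else overlap (σ i) (σ j))
        = Real.exp ((k : ℝ) * ((k : ℝ) - 1) / n * (β n) ^ 2 + e) := by
  have hKpos : (0:ℝ) < (k:ℝ) := by exact_mod_cast hk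
  refine ⟨22*(k:ℝ)^7, by positivity, ?_⟩
  obtain ⟨N₀, hN₀⟩ : ∃ N₀, ∀ n ≥ N₀, β n / n < ((8:ℝ)*(k:ℝ)^6)⁻¹ :=
    eventually_atTop.mp (hβn.eventually (gt_mem_nhds (by positivity)))
  refine ⟨max N₀ 1, fun n hn => ?_⟩
  have hn1 : 1 ≤ n := le_trans (le_max_right _ _) hn
  have hnpos : (0:ℝ) < n := by exact_mod_cast hn1
  have hn0 : (n:ℝ) ≠ 0 := ne_of_gt hnpos
  set t := β n / n with htdef
  have ht0 : 0 ≤ t := div_nonneg (hβ n) hnpos.le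
  have ht8 : t ≤ ((8:ℝ)*(k:ℝ)^6)⁻¹ := le_of_lt (hN₀ n (le_trans (le_max_left _ _) hn))
  have hβt : β n = t * n := by rw [htdef]; field_simp
  have hGpos : 0 < G k t := Finset.sum_pos (fun δ _ => Real.exp_pos _) Finset.univ_nonempty
  have hP : (0:ℝ) < (2:ℝ)^k := by positivity
  have hFpos : 0 < G k t / 2^k := div_pos hGpos hP
  have hsum : ∑ σ : Fin k → Fin n → Bool,
        Real.exp (β n * ∑ i, ∑ j, if i = j then 0 else overlap (σ i) (σ j))
      = Real.exp (-((k:ℝ) * β n)) * (G k t)^n := by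
    have h1 : ∀ σ : Fin k → Fin n → Bool,
        Real.exp (β n * ∑ i, ∑ j, if i = j then 0 else overlap (σ i) (σ j))
        = Real.exp (-((k:ℝ) * β n)) * ∏ s, Real.exp (t * (∑ i, spin (σ i s))^2) := by
      intro σ
      rw [exponent_rewrite (by omega : 0 < n) σ]
      have harg : β n * ((n:ℝ)⁻¹ * (∑ s, (∑ i, spin (σ i s))^2) - k)
          = -((k:ℝ) * β n) + ∑ s, t * (∑ i, spin (σ i s))^2 := by
        rw [← Finset.mul_sum, htdef]
        field_simp
        ring
      rw [harg, Real.exp_add, Real.exp_sum]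
    calc ∑ σ : Fin k → Fin n → Bool,
          Real.exp (β n * ∑ i, ∑ j, if i = j then 0 else overlap (σ i) (σ j))
        = ∑ σ : Fin k → Fin n → Bool,
            Real.exp (-((k:ℝ) * β n)) * ∏ s, Real.exp (t * (∑ i, spin (σ i s))^2) :=
          Finset.sum_congr rfl (fun σ _ => h1 σ)
      _ = Real.exp (-((k:ℝ) * β n)) *
            ∑ σ : Fin k → Fin n → Bool, ∏ s, Real.exp (t * (∑ i, spin (σ i s))^2) := by
          rw [← Finset.mul_sum]
      _ = Real.exp (-((k:ℝ) * β n)) * (G k t)^n := by rw [factorize]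
  have hLHS : ((2 : ℝ) ^ (n * k))⁻¹ *
        ∑ σ : Fin k → Fin n → Bool,
          Real.exp (β n * ∑ i, ∑ j, if i = j then 0 else overlap (σ i) (σ j))
      = Real.exp (-((k:ℝ) * β n) + n * Real.log (G k t / 2^k)) := by
    rw [hsum, Real.exp_add, Real.exp_nat_mul, Real.exp_log hFpos]
    rw [div_pow, show (2:ℝ)^(n*k) = ((2:ℝ)^k)^n by rw [← pow_mul, mul_comm]]
    field_simp
  refine ⟨(-((k:ℝ) * β n) + n * Real.log (G k t / 2^k))
      - (k:ℝ)*((k:ℝ)-1)/n*(β n)^2, ?_, ?_⟩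
  · have hkey := key k hk t ht0 ht8
    have heq : (-((k:ℝ) * β n) + n * Real.log (G k t / 2^k)) - (k:ℝ)*((k:ℝ)-1)/n*(β n)^2
        = n * (Real.log (G k t / 2^k) - k*t - k*((k:ℝ)-1)*t^2) := by
      rw [hβt]
      field_simp
      ring
    rw [heq, abs_mul, abs_of_nonneg hnpos.le]
    calc (n:ℝ) * |Real.log (G k t / 2^k) - k*t - k*((k:ℝ)-1)*t^2|
        ≤ n * (22*(k:ℝ)^7*t^3) := mul_le_mul_of_nonneg_left hkey hnpos.le
      _ = 22*(k:ℝ)^7 * (β n)^3 / n^2 := by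
          rw [hβt]
          field_simp
  · rw [hLHS]
    congr 1
    ring
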